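/- Let x = σ^∞(a) be the fixed point of a primitive substitution σ prolongable on a. Then x is linearly recurrent with constant K_σ = Q_σ·R_σ·|σ|, where Q_σ satisfies |σ^k| ≤ Q_σ·⟨σ^k⟩ for all k, R_σ is the maximal gap between successive occurrences of length-2 factors, and |σ| = max_a |σ(a)|. -/
import Mathlib


/-- The factor of the sequence `x` starting at position `i` of length `n`. -/
def seqWord {A : Type*} (x : ℕ → A) (i n : ℕ) : List A :=
  (List.range n).map (fun k => x (i + k))

/-- The word `u` occurs in the sequence `x` at position `i`. -/
def occursAt {A : Type*} (x : ℕ → A) (u : List A) (i : ℕ) : Prop :=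
  seqWord x i u.length = u

/-- `u` is a factor of the sequence `x`. -/
def IsFactor {A : Type*} (x : ℕ → A) (u : List A) : Prop :=
  ∃ i, occursAt x u i

/-- `u` is a prefix of the sequence `x`. -/
def IsPrefixSeq {A : Type*} (u : List A) (x : ℕ → A) : Prop :=
  occursAt x u 0

/-- `x` is uniformly recurrent: every factor occurs in every sufficiently long window. -/
def UnifRec {A : Type*} (x : ℕ → A) : Prop :=
  ∀ u : List A, IsFactor x u → ∃ C, ∀ i, ∃ j, i ≤ j ∧ j < i + C ∧ occursAt x u j

/-- `w` is a return word to `u` in `x`: the factor between two consecutive occurrences of `u`. -/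
def IsReturnWord {A : Type*} (x : ℕ → A) (u w : List A) : Prop :=
  ∃ i j, i < j ∧ occursAt x u i ∧ occursAt x u j ∧
    (∀ k, i < k → k < j → ¬ occursAt x u k) ∧ w = seqWord x i (j - i)

/-- Apply a morphism (given on letters) to a word, by concatenation. -/
def morphApply {I A : Type*} (θ : I → List A) (l : List I) : List A :=
  (l.map θ).flatten

/-- Iterate an endomorphism `σ` of the free monoid `n` times on a word. -/
def morphIter {A : Type*} (σ : A → List A) : ℕ → List A → List A
  | 0, l => l
  | n + 1, l => morphApply σ (morphIter σ n l)

/-- `x` is ultimately periodic. -/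
def UltPeriodic {A : Type*} (x : ℕ → A) : Prop :=
  ∃ p > 0, ∃ N, ∀ n ≥ N, x (n + p) = x n

/-- `x` is linearly recurrent with constant `K`: it is uniformly recurrent and two
successive occurrences of any nonempty factor `u` differ by at most `K * |u|`. -/
def LinRec {A : Type*} (K : ℕ) (x : ℕ → A) : Prop :=
  UnifRec x ∧ ∀ u : List A, u ≠ [] → IsFactor x u →
    ∀ i, occursAt x u i → ∃ j, i < j ∧ j ≤ i + K * u.length ∧ occursAt x u j

/-- `σ` is prolongable on the letter `a`. -/
def Prolongable {A : Type*} (σ : A → List A) (a : A) : Prop :=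
  (∃ t, σ a = a :: t ∧ t ≠ []) ∧
    Filter.Tendsto (fun n => (morphIter σ n [a]).length) Filter.atTop Filter.atTop

/-- `σ` is growing: the image of each letter has length tending to infinity. -/
def Growing {A : Type*} (σ : A → List A) : Prop :=
  ∀ a, Filter.Tendsto (fun n => (morphIter σ n [a]).length) Filter.atTop Filter.atTop

/-- `σ` is primitive: some power sends every letter to a word containing every letter. -/
def Primitive {A : Type*} (σ : A → List A) : Prop :=
  ∃ n > 0, ∀ a b : A, b ∈ morphIter σ n [a]

/-- `x` is the fixed point `σ^∞(a)` of `σ`, prolongable on `a`. -/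
def IsFixedPointOf {A : Type*} (σ : A → List A) (a : A) (x : ℕ → A) : Prop :=
  x 0 = a ∧ ∀ n, IsPrefixSeq (morphIter σ n [a]) x

/-- The word `w` belongs to the language of the endomorphism `σ`. -/
def InLang {A : Type*} (σ : A → List A) (w : List A) : Prop :=
  ∃ a n, w <:+: morphIter σ n [a]

/-- The word `u` occurs at position `i` in the word `w`. -/
def listOccursAt {A : Type*} (w u : List A) (i : ℕ) : Prop :=
  i + u.length ≤ w.length ∧ (w.drop i).take u.length = u

/-- `|σ^k|`: the maximal length of the image of a letter under `σ^k`. -/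
def maxLen {A : Type*} [Fintype A] [Nonempty A] (σ : A → List A) (k : ℕ) : ℕ :=
  Finset.univ.sup' Finset.univ_nonempty (fun a => (morphIter σ k [a]).length)

/-- `⟨σ^k⟩`: the minimal length of the image of a letter under `σ^k`. -/
def minLen {A : Type*} [Fintype A] [Nonempty A] (σ : A → List A) (k : ℕ) : ℕ :=
  Finset.univ.inf' Finset.univ_nonempty (fun a => (morphIter σ k [a]).length)

/-- `(R, θ, z)` is the derived-sequence data of `x` on the prefix `u`: `θ 0, …, θ (R-1)`
enumerate the return words to `u` in order of first appearance in `x`, `z` is the derived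
sequence, i.e. the coding of the decomposition of `x` into return words to `u`,
so that `Θ_{x,u}(z) = x`. -/
def IsDerivedSeq {A : Type*} (x : ℕ → A) (u : List A) (R : ℕ)
    (θ : ℕ → List A) (z : ℕ → ℕ) : Prop :=
  (∀ i < R, IsReturnWord x u (θ i)) ∧
  (∀ w, IsReturnWord x u w → ∃ i < R, θ i = w) ∧
  (∀ i < R, ∀ j < R, i < j →
      sInf {k | occursAt x (θ i) k} < sInf {k | occursAt x (θ j) k}) ∧
  (∀ k, z k < R) ∧
  (∀ n, IsPrefixSeq (morphApply θ (seqWord z 0 n)) x)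

section Aux
variable {A : Type*}

theorem seqWord_length (x : ℕ → A) (i n : ℕ) : (seqWord x i n).length = n := by
  simp [seqWord]

theorem seqWord_getElem (x : ℕ → A) (i n k : ℕ) (h : k < n) :
    (seqWord x i n)[k]'(by simp [seqWord_length, h]) = x (i + k) := by
  simp [seqWord]

theorem occursAt_iff {x : ℕ → A} {u : List A} {i : ℕ} :
    occursAt x u i ↔ ∀ k (h : k < u.length), x (i + k) = u[k] := by
  constructor
  · intro h k hk
    have h2 := List.getElem_of_eq h.symm hk
    rw [h2, seqWord_getElem _ _ _ _ hk]
  · intro h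
    apply List.ext_getElem (by simp [seqWord_length])
    intro k h1 h2
    rw [seqWord_getElem _ _ _ _ (by simpa [seqWord_length] using h1)]
    exact h k h2

theorem occursAt_nil (x : ℕ → A) (i : ℕ) : occursAt x ([] : List A) i := by
  simp [occursAt, seqWord]

theorem occursAt_seqWord (x : ℕ → A) (i n : ℕ) : occursAt x (seqWord x i n) i := by
  simp [occursAt, seqWord_length]

theorem seqWord_append (x : ℕ → A) (i m n : ℕ) :
    seqWord x i (m + n) = seqWord x i m ++ seqWord x (i + m) n := by
  apply List.ext_getElem (by simp [seqWord_length])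
  intro k h1 h2
  rw [seqWord_getElem _ _ _ _ (by simpa [seqWord_length] using h1)]
  rcases Nat.lt_or_ge k m with hk | hk
  · rw [List.getElem_append_left (by simpa [seqWord_length] using hk),
      seqWord_getElem _ _ _ _ hk]
  · rw [List.getElem_append_right (by simpa [seqWord_length] using hk)]
    rw [seqWord_getElem]
    · congr 1
      simp [seqWord_length]
      omega
    · have := (by simpa [seqWord_length] using h1 : k < m + n)
      simp [seqWord_length]
      omega

theorem seqWord_one (x : ℕ → A) (i : ℕ) : seqWord x i 1 = [x i] := by
  simp [seqWord, List.range_succ]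

theorem seqWord_two (x : ℕ → A) (i : ℕ) : seqWord x i 2 = [x i, x (i + 1)] := by
  have : (2 : ℕ) = 1 + 1 := rfl
  rw [this, seqWord_append, seqWord_one, seqWord_one]; rfl

theorem occursAt_append_left {x : ℕ → A} {u v : List A} {i : ℕ}
    (h : occursAt x (u ++ v) i) : occursAt x u i := by
  rw [occursAt_iff] at h ⊢
  intro k hk
  have := h k (by simp; omega)
  rwa [List.getElem_append_left hk] at this

theorem occursAt_append_right {x : ℕ → A} {u v : List A} {i : ℕ}
    (h : occursAt x (u ++ v) i) : occursAt x v (i + u.length) := by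
  rw [occursAt_iff] at h ⊢
  intro k hk
  have := h (u.length + k) (by simp; omega)
  rw [List.getElem_append_right (by omega)] at this
  simpa [Nat.add_assoc, Nat.add_sub_cancel_left] using this

theorem occursAt_infix {x : ℕ → A} {w u l1 l2 : List A} {i : ℕ}
    (h : occursAt x w i) (hw : w = l1 ++ u ++ l2) : occursAt x u (i + l1.length) := by
  subst hw
  exact occursAt_append_right (occursAt_append_left (by rwa [List.append_assoc] at h))

theorem morphApply_nil {I : Type*} (θ : I → List A) : morphApply θ [] = [] := rfl

theorem morphApply_append {I : Type*} (θ : I → List A) (l1 l2 : List I) :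
    morphApply θ (l1 ++ l2) = morphApply θ l1 ++ morphApply θ l2 := by
  simp [morphApply]

theorem morphApply_singleton {I : Type*} (θ : I → List A) (b : I) :
    morphApply θ [b] = θ b := by simp [morphApply]

theorem morphIter_nil (σ : A → List A) (k : ℕ) : morphIter σ k [] = [] := by
  induction k with
  | zero => rfl
  | succ k ih => simp [morphIter, ih, morphApply_nil]

theorem morphIter_append (σ : A → List A) (k : ℕ) (l1 l2 : List A) :
    morphIter σ k (l1 ++ l2) = morphIter σ k l1 ++ morphIter σ k l2 := by
  induction k with
  | zero => rfl
  | succ k ih => simp [morphIter, ih, morphApply_append]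

theorem morphIter_add (σ : A → List A) (k n : ℕ) (l : List A) :
    morphIter σ (k + n) l = morphIter σ k (morphIter σ n l) := by
  induction k with
  | zero => simp [morphIter]
  | succ k ih => rw [Nat.succ_add]; simp [morphIter, ih]

theorem morphIter_eq_morphApply (σ : A → List A) (k : ℕ) (l : List A) :
    morphIter σ k l = morphApply (fun b => morphIter σ k [b]) l := by
  induction l with
  | nil => simp [morphIter_nil, morphApply_nil]
  | cons b l ih =>
      have : b :: l = [b] ++ l := rfl
      rw [this, morphIter_append, morphApply_append, ih, morphApply_singleton]

end Aux

section Aux2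
variable {A : Type*}

theorem tau_ne_nil {σ : A → List A} (hgrow : Growing σ) (k : ℕ) (b : A) :
    morphIter σ k [b] ≠ [] := by
  intro h
  obtain ⟨M, hM⟩ := (Filter.eventually_atTop.1 (Filter.Tendsto.eventually_ge_atTop (hgrow b) 1))
  have h2 : morphIter σ (M + k) [b] = [] := by
    rw [morphIter_add, h, morphIter_nil]
  have := hM (M + k) (Nat.le_add_right _ _)
  rw [h2] at this
  simp at this

theorem morphIter_one (σ : A → List A) (b : A) : morphIter σ 1 [b] = σ b := by
  show morphApply σ (morphIter σ 0 [b]) = σ b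
  exact morphApply_singleton σ b

theorem seqWord_prefix_of {x : ℕ → A} {w : List A} (h : occursAt x w 0) {m : ℕ}
    (hm : m ≤ w.length) : ∃ r, w = seqWord x 0 m ++ r := by
  have h2 : seqWord x 0 w.length = w := h
  refine ⟨seqWord x m (w.length - m), ?_⟩
  conv_lhs => rw [← h2, show w.length = m + (w.length - m) from by omega, seqWord_append]
  simp

theorem exists_long_prefix {σ : A → List A} {a : A} (hprol : Prolongable σ a) (L : ℕ) :
    ∃ n, L ≤ (morphIter σ n [a]).length :=
  (Filter.Tendsto.eventually_ge_atTop hprol.2 L).exists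

theorem image_prefix {σ : A → List A} {a : A} {x : ℕ → A}
    (hprol : Prolongable σ a) (hx : IsFixedPointOf σ a x) (k m : ℕ) :
    occursAt x (morphApply (fun b => morphIter σ k [b]) (seqWord x 0 m)) 0 := by
  obtain ⟨n, hn⟩ := exists_long_prefix hprol m
  have hpre : occursAt x (morphIter σ n [a]) 0 := hx.2 n
  obtain ⟨r, hr⟩ := seqWord_prefix_of hpre hn
  have h2 : morphIter σ (k + n) [a]
      = morphIter σ k (seqWord x 0 m) ++ morphIter σ k r := by
    rw [morphIter_add, hr, morphIter_append]
  rw [← morphIter_eq_morphApply]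
  exact occursAt_append_left (h2 ▸ hx.2 (k + n))

theorem morphApply_length_le {θ : A → List A} {M : ℕ} (hM : ∀ b, (θ b).length ≤ M)
    (l : List A) : (morphApply θ l).length ≤ l.length * M := by
  induction l with
  | nil => simp [morphApply_nil]
  | cons b l ih =>
      have : b :: l = [b] ++ l := rfl
      rw [this, morphApply_append, List.length_append, List.length_append,
        morphApply_singleton]
      have := hM b
      simp only [List.length_singleton]
      calc (θ b).length + (morphApply θ l).length ≤ M + l.length * M := by
            exact Nat.add_le_add (hM b) ih
        _ = (1 + l.length) * M := by ring

end Aux2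

section Aux3
variable {A : Type*} [Fintype A] [Nonempty A]

theorem minLen_le {σ : A → List A} (k : ℕ) (b : A) :
    minLen σ k ≤ (morphIter σ k [b]).length :=
  Finset.inf'_le _ (Finset.mem_univ b)

theorem le_maxLen {σ : A → List A} (k : ℕ) (b : A) :
    (morphIter σ k [b]).length ≤ maxLen σ k :=
  Finset.le_sup' (fun a : A => (morphIter σ k [a]).length) (Finset.mem_univ b)

theorem minLen_zero (σ : A → List A) : minLen σ 0 = 1 := by
  simp [minLen, morphIter]

theorem minLen_succ_le (σ : A → List A) (k : ℕ) :
    minLen σ (k + 1) ≤ maxLen σ 1 * minLen σ k := by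
  obtain ⟨b, _, hb⟩ := Finset.exists_mem_eq_inf' (Finset.univ_nonempty)
    (fun a : A => (morphIter σ k [a]).length)
  have h1 : minLen σ (k + 1) ≤ (morphIter σ (k + 1) [b]).length := minLen_le _ _
  have h2 : morphIter σ (k + 1) [b] = morphApply σ (morphIter σ k [b]) := rfl
  have h3 : ∀ c, (σ c).length ≤ maxLen σ 1 := by
    intro c
    rw [← morphIter_one σ c]
    exact le_maxLen 1 c
  have hb' : minLen σ k = (morphIter σ k [b]).length := hb
  calc minLen σ (k + 1) ≤ (morphIter σ (k + 1) [b]).length := h1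
    _ = (morphApply σ (morphIter σ k [b])).length := by rw [h2]
    _ ≤ (morphIter σ k [b]).length * maxLen σ 1 := morphApply_length_le h3 _
    _ = minLen σ k * maxLen σ 1 := by rw [hb']
    _ = maxLen σ 1 * minLen σ k := Nat.mul_comm _ _

theorem exists_minLen_ge {σ : A → List A} (hgrow : Growing σ) (n : ℕ) :
    ∃ k, n ≤ minLen σ k := by
  have h : ∀ᶠ k in Filter.atTop, ∀ b : A, n ≤ (morphIter σ k [b]).length := by
    rw [Filter.eventually_all]
    exact fun b => Filter.Tendsto.eventually_ge_atTop (hgrow b) n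
  obtain ⟨k, hk⟩ := h.exists
  exact ⟨k, Finset.le_inf' _ _ (fun b _ => hk b)⟩

end Aux3

section Aux4
variable {A : Type*}

/-- Start position of the `m`-th block at level `k` in the decomposition of `x`. -/
def posFn (σ : A → List A) (x : ℕ → A) (k m : ℕ) : ℕ :=
  (morphApply (fun b => morphIter σ k [b]) (seqWord x 0 m)).length

theorem posFn_zero (σ : A → List A) (x : ℕ → A) (k : ℕ) : posFn σ x k 0 = 0 := rfl

theorem posFn_add (σ : A → List A) (x : ℕ → A) (k m d : ℕ) :
    posFn σ x k (m + d)
      = posFn σ x k m + (morphApply (fun b => morphIter σ k [b]) (seqWord x m d)).length := by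
  unfold posFn
  rw [seqWord_append, morphApply_append, List.length_append, Nat.zero_add]

theorem posFn_succ (σ : A → List A) (x : ℕ → A) (k m : ℕ) :
    posFn σ x k (m + 1) = posFn σ x k m + (morphIter σ k [x m]).length := by
  rw [posFn_add, seqWord_one, morphApply_singleton]

theorem posFn_lt_succ {σ : A → List A} (hgrow : Growing σ) (x : ℕ → A) (k m : ℕ) :
    posFn σ x k m < posFn σ x k (m + 1) := by
  rw [posFn_succ]
  have := List.length_pos_iff.2 (tau_ne_nil hgrow k (x m))
  omega

theorem posFn_strictMono {σ : A → List A} (hgrow : Growing σ) (x : ℕ → A) (k : ℕ) :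
    StrictMono (posFn σ x k) :=
  strictMono_nat_of_lt_succ (posFn_lt_succ hgrow x k)

theorem le_posFn {σ : A → List A} (hgrow : Growing σ) (x : ℕ → A) (k m : ℕ) :
    m ≤ posFn σ x k m := by
  induction m with
  | zero => simp
  | succ m ih => have := posFn_lt_succ hgrow x k m; omega

theorem exists_block {σ : A → List A} (hgrow : Growing σ) (x : ℕ → A) (k p : ℕ) :
    ∃ m, posFn σ x k m ≤ p ∧ p < posFn σ x k (m + 1) := by
  have hex : ∃ m, p < posFn σ x k (m + 1) :=
    ⟨p, lt_of_lt_of_le (Nat.lt_succ_self p) (le_posFn hgrow x k (p + 1))⟩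
  refine ⟨Nat.find hex, ?_, Nat.find_spec hex⟩
  rcases h : Nat.find hex with _ | m0
  · simp [posFn_zero]
  · have h2 := Nat.find_min hex (show m0 < Nat.find hex by omega)
    omega

theorem block_occurs {σ : A → List A} {a : A} {x : ℕ → A}
    (hprol : Prolongable σ a) (hx : IsFixedPointOf σ a x) (k m r : ℕ) :
    occursAt x (morphApply (fun b => morphIter σ k [b]) (seqWord x m r)) (posFn σ x k m) := by
  have h := image_prefix hprol hx k (m + r)
  rw [seqWord_append, morphApply_append] at h
  have h2 := occursAt_append_right h
  simpa [posFn] using h2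

theorem listOccursAt_iff_occursAt {x : ℕ → A} {w u : List A} {p : ℕ}
    (hw : occursAt x w 0) (hp : p + u.length ≤ w.length) :
    listOccursAt w u p ↔ occursAt x u p := by
  have hwk : ∀ k (h : k < w.length), x k = w[k] := by
    intro k h
    simpa using occursAt_iff.1 hw k h
  constructor
  · rintro ⟨-, heq⟩
    rw [occursAt_iff]
    intro k hk
    have h2 := List.getElem_of_eq heq.symm hk
    rw [h2]
    rw [List.getElem_take, List.getElem_drop]
    exact (hwk (p + k) (by omega))
  · intro h
    refine ⟨hp, ?_⟩
    apply List.ext_getElem (by simp; omega)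
    intro k h1 h2
    rw [List.getElem_take, List.getElem_drop, ← hwk (p + k) (by omega)]
    exact occursAt_iff.1 h k h2

theorem infix_of_occurs {x : ℕ → A} {w u : List A} {p : ℕ}
    (hw : occursAt x w 0) (hp : p + u.length ≤ w.length) (h : occursAt x u p) :
    u <:+: w := by
  have := ((listOccursAt_iff_occursAt hw hp).2 h).2
  rw [← this]
  exact ((List.take_prefix _ _).isInfix).trans ((List.drop_suffix _ _).isInfix)

end Aux4

section Aux5
variable {A : Type*} [Fintype A] [Nonempty A]

omit [Fintype A] [Nonempty A] in
theorem pair_next {σ : A → List A} {a : A} {x : ℕ → A} {R : ℕ}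
    (hprim : Primitive σ) (hgrow : Growing σ) (hprol : Prolongable σ a)
    (hx : IsFixedPointOf σ a x)
    (hR : ∀ w u : List A, InLang σ w → InLang σ u → u.length = 2 →
      ∀ i j, listOccursAt w u i → listOccursAt w u j → i < j →
        (∀ k, i < k → k < j → ¬ listOccursAt w u k) → j - i ≤ R)
    (m : ℕ) :
    ∃ m', m < m' ∧ m' ≤ m + R ∧ occursAt x (seqWord x m 2) m' := by
  classical
  set bc := seqWord x m 2 with hbcdef
  have hbc_len : bc.length = 2 := seqWord_length x m 2
  have hbc_occ : occursAt x bc m := occursAt_seqWord x m 2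
  obtain ⟨n1, hn1⟩ := exists_long_prefix hprol (m + 2)
  have hw0 : occursAt x (morphIter σ n1 [a]) 0 := hx.2 n1
  have hbc_infix : bc <:+: morphIter σ n1 [a] :=
    infix_of_occurs hw0 (by omega) hbc_occ
  obtain ⟨N, -, hN⟩ := hprim
  have hblk : ∀ d : A, bc <:+: morphIter σ (n1 + N) [d] := by
    intro d
    obtain ⟨l1, l2, hl⟩ := List.append_of_mem (hN d a)
    have heq : morphIter σ (n1 + N) [d]
        = morphIter σ n1 l1 ++ (morphIter σ n1 [a] ++ morphIter σ n1 l2) := by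
      rw [morphIter_add, hl, show l1 ++ a :: l2 = l1 ++ ([a] ++ l2) from rfl,
        morphIter_append, morphIter_append]
    exact hbc_infix.trans ⟨morphIter σ n1 l1, morphIter σ n1 l2, by
      rw [heq]; simp [List.append_assoc]⟩
  have hfind : ∃ q, m < q ∧ occursAt x bc q := by
    obtain ⟨l1, l2, hl⟩ := hblk (x (m + 1))
    refine ⟨posFn σ x (n1 + N) (m + 1) + l1.length, ?_, ?_⟩
    · have := le_posFn hgrow x (n1 + N) (m + 1); omega
    · have hb := block_occurs hprol hx (n1 + N) (m + 1) 1
      rw [seqWord_one, morphApply_singleton] at hb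
      exact occursAt_infix hb hl.symm
  set m' := Nat.find hfind with hm'def
  obtain ⟨hmm', hocc'⟩ := Nat.find_spec hfind
  obtain ⟨n2, hn2⟩ := exists_long_prefix hprol (m' + 2)
  have hww : occursAt x (morphIter σ n2 [a]) 0 := hx.2 n2
  have h1 : listOccursAt (morphIter σ n2 [a]) bc m :=
    (listOccursAt_iff_occursAt hww (by omega)).2 hbc_occ
  have h2 : listOccursAt (morphIter σ n2 [a]) bc m' :=
    (listOccursAt_iff_occursAt hww (by omega)).2 hocc'
  have h3 : ∀ k, m < k → k < m' → ¬ listOccursAt (morphIter σ n2 [a]) bc k := by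
    intro k hk1 hk2 hk
    have hko : occursAt x bc k :=
      (listOccursAt_iff_occursAt hww (by omega)).1 hk
    exact Nat.find_min hfind hk2 ⟨hk1, hko⟩
  have hRm := hR (morphIter σ n2 [a]) bc ⟨a, n2, List.infix_refl _⟩ ⟨a, n1, hbc_infix⟩
    hbc_len m m' h1 h2 hmm' h3
  exact ⟨m', hmm', by omega, hocc'⟩

end Aux5

/-- Proposition (Durand 1998): the fixed point `x = σ^∞(a)` of a primitive substitution
`σ` prolongable on `a` is linearly recurrent with constant `K_σ = Q_σ · R_σ · |σ|`,
where `Q_σ` satisfies `|σ^k| ≤ Q_σ·⟨σ^k⟩` for all `k` and `R_σ` bounds the gap between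
successive occurrences of length-2 factors of the language of `σ`. -/
theorem fixedPoint_linearly_recurrent {A : Type*} [Fintype A] [Nonempty A]
    (σ : A → List A) (a : A)
    (hprim : Primitive σ) (hgrow : Growing σ) (hprol : Prolongable σ a)
    (x : ℕ → A) (hx : IsFixedPointOf σ a x)
    (Q R : ℕ) (hQ : ∀ k, maxLen σ k ≤ Q * minLen σ k)
    (hR : ∀ w u : List A, InLang σ w → InLang σ u → u.length = 2 →
      ∀ i j, listOccursAt w u i → listOccursAt w u j → i < j →
        (∀ k, i < k → k < j → ¬ listOccursAt w u k) → j - i ≤ R) :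
    LinRec (Q * R * maxLen σ 1) x := by
  classical
  have hmax1 : 1 ≤ maxLen σ 1 := by
    obtain ⟨b⟩ := ‹Nonempty A›
    exact le_trans (List.length_pos_iff.2 (tau_ne_nil hgrow 1 b)) (le_maxLen 1 b)
  have hgap : ∀ u : List A, u ≠ [] → ∀ i, occursAt x u i →
      ∃ j, i < j ∧ j ≤ i + Q * R * maxLen σ 1 * u.length ∧ occursAt x u j := by
    intro u hu i hi
    set n := u.length with hn
    have hn1 : 1 ≤ n := List.length_pos_iff.2 hu
    have hex : ∃ k, n ≤ minLen σ k := exists_minLen_ge hgrow n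
    set k := Nat.find hex with hkdef
    have hk : n ≤ minLen σ k := Nat.find_spec hex
    have hkey : minLen σ k ≤ maxLen σ 1 * n := by
      by_cases hc : k = 0
      · rw [hc, minLen_zero]
        have := Nat.mul_le_mul hmax1 hn1
        simpa using this
      · obtain ⟨k0, hk0⟩ := Nat.exists_eq_succ_of_ne_zero hc
        have hlt : ¬ (n ≤ minLen σ k0) := Nat.find_min hex (show k0 < k by omega)
        rw [hk0]
        calc minLen σ (k0 + 1) ≤ maxLen σ 1 * minLen σ k0 := minLen_succ_le σ k0
          _ ≤ maxLen σ 1 * n := Nat.mul_le_mul_left _ (by omega)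
    obtain ⟨m, hm1, hm2⟩ := exists_block hgrow x k i
    set t := i - posFn σ x k m with ht
    obtain ⟨m', hmm', hm'R, hocc'⟩ := pair_next hprim hgrow hprol hx hR m
    set w2 := morphApply (fun b => morphIter σ k [b]) (seqWord x m 2) with hw2
    have hw2occ : occursAt x w2 (posFn σ x k m) := block_occurs hprol hx k m 2
    have hpair : seqWord x m' 2 = seqWord x m 2 := by
      have h := hocc'
      unfold occursAt at h
      rwa [seqWord_length] at h
    have hw2occ' : occursAt x w2 (posFn σ x k m') := by
      rw [hw2, ← hpair]
      exact block_occurs hprol hx k m' 2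
    have hlen_w2 : w2.length
        = (morphIter σ k [x m]).length + (morphIter σ k [x (m + 1)]).length := by
      rw [hw2, seqWord_two, show [x m, x (m + 1)] = [x m] ++ [x (m + 1)] from rfl,
        morphApply_append, List.length_append, morphApply_singleton, morphApply_singleton]
    have hpos1 : posFn σ x k (m + 1) = posFn σ x k m + (morphIter σ k [x m]).length :=
      posFn_succ σ x k m
    have hnb : n ≤ (morphIter σ k [x (m + 1)]).length := le_trans hk (minLen_le k _)
    have hspan : t + n ≤ w2.length := by omega
    set D := posFn σ x k m' - posFn σ x k m with hD
    have hDpos : posFn σ x k m < posFn σ x k m' := posFn_strictMono hgrow x k hmm'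
    refine ⟨i + D, by omega, ?_, ?_⟩
    · have hdm : m' - m ≤ R := by omega
      have hD_eq : posFn σ x k m' = posFn σ x k m
          + (morphApply (fun b => morphIter σ k [b]) (seqWord x m (m' - m))).length := by
        rw [← posFn_add]
        congr 1
        omega
      have hblen : (morphApply (fun b => morphIter σ k [b]) (seqWord x m (m' - m))).length
          ≤ (m' - m) * maxLen σ k := by
        have := morphApply_length_le (θ := fun b => morphIter σ k [b]) (M := maxLen σ k)
          (fun b => le_maxLen (σ := σ) k b) (seqWord x m (m' - m))
        simpa [seqWord_length] using this
      have h5 : D ≤ R * maxLen σ k := by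
        have := Nat.mul_le_mul_right (maxLen σ k) hdm
        omega
      have h6 : maxLen σ k ≤ Q * minLen σ k := hQ k
      have h7 : D ≤ R * (Q * (maxLen σ 1 * n)) :=
        le_trans h5 (Nat.mul_le_mul_left R (le_trans h6 (Nat.mul_le_mul_left Q hkey)))
      have heq : R * (Q * (maxLen σ 1 * n)) = Q * R * maxLen σ 1 * n := by ring
      omega
    · rw [occursAt_iff]
      intro c hc
      have hcn : c < n := hc
      have hp : t + c < w2.length := by omega
      calc x (i + D + c) = x (posFn σ x k m' + (t + c)) := by
            rw [show i + D + c = posFn σ x k m' + (t + c) from by omega]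
        _ = w2[t + c]'hp := occursAt_iff.1 hw2occ' (t + c) hp
        _ = x (posFn σ x k m + (t + c)) := (occursAt_iff.1 hw2occ (t + c) hp).symm
        _ = x (i + c) := by rw [show posFn σ x k m + (t + c) = i + c from by omega]
        _ = u[c] := occursAt_iff.1 hi c hc
  have hUR : UnifRec x := by
    intro u hfac
    rcases eq_or_ne u [] with rfl | hu
    · exact ⟨1, fun i => ⟨i, le_rfl, by omega, occursAt_nil x i⟩⟩
    · obtain ⟨i0, hi0⟩ := hfac
      set G := Q * R * maxLen σ 1 * u.length with hG
      refine ⟨i0 + G + 1, fun i => ?_⟩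
      induction i with
      | zero => exact ⟨i0, Nat.zero_le _, by omega, hi0⟩
      | succ i ih =>
          obtain ⟨j, hj1, hj2, hj3⟩ := ih
          rcases Nat.lt_or_ge j (i + 1) with hlt | hge
          · obtain ⟨j', h1, h2, h3⟩ := hgap u hu j hj3
            exact ⟨j', by omega, by omega, h3⟩
          · exact ⟨j, hge, by omega, hj3⟩
  exact ⟨hUR, fun u hu _ i hi => hgap u hu i hi⟩
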